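/- Let a, N ∈ ℕ, m ∈ ℤ with m > N, λ ∈ ℂ, and let (f_{-N},…,f_N) ∈ Ξ(λ,a,N,m). Then: (1) if 0 ≤ j ≤ N-1, λ+j-1 ∉ M_{a+m-j}^{m-j-1}, and f_{j+1} = 0, then f_j = 0; (2) if 1 ≤ j ≤ N, γ(λ, a+m-j-2) ≠ 0, and f_{-j+1} = 0, then f_{-j} = 0. -/

import Mathlib

noncomputable section

open Polynomial Finset

/-- The space `Pol_b[t]_even`: span of the monomials `t^(b-2i)`, `0 ≤ i ≤ ⌊b/2⌋`
(zero space when `b < 0`). -/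
def polEven (b : ℤ) (f : ℂ[X]) : Prop :=
  ∀ n : ℕ, f.coeff n ≠ 0 → (n : ℤ) ≤ b ∧ (2 : ℤ) ∣ (b - n)

/-- Imaginary Gegenbauer operator `S_ℓ^μ`. -/
def gegenS (μ : ℂ) (ℓ : ℤ) (f : ℂ[X]) : ℂ[X] :=
  -((1 + X ^ 2) * derivative (derivative f)
      + (1 + 2 * C μ) * X * derivative f
      - C ((ℓ : ℂ) * ((ℓ : ℂ) + 2 * μ)) * f)

/-- Euler operator `ϑ_t`. -/
def euler (f : ℂ[X]) : ℂ[X] := X * derivative f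

/-- Renormalized Gegenbauer polynomial `C̃_n^μ(z)` for a natural number degree `n`. -/
def gegenC (μ : ℂ) (n : ℕ) : ℂ[X] :=
  ∑ k ∈ range (n / 2 + 1),
    C ((-1 : ℂ) ^ k / ((k.factorial : ℂ) * ((n - 2 * k).factorial : ℂ)) *
        ∏ s ∈ range (n / 2 - k), (μ + (((n + 1) / 2 : ℕ) : ℂ) + (s : ℂ))) *
      (C 2 * X) ^ (n - 2 * k)

/-- `C̃_ℓ^μ(z)` for `ℓ : ℤ` (zero for `ℓ < 0`). -/
def gegenCZ (μ : ℂ) (ℓ : ℤ) : ℂ[X] := if 0 ≤ ℓ then gegenC μ ℓ.toNat else 0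

/-- `C̃_ℓ^μ(it)`: substitution `z = it`. -/
def gegenCit (μ : ℂ) (ℓ : ℤ) : ℂ[X] := (gegenCZ μ ℓ).comp (C Complex.I * X)

/-- `γ(μ, ℓ)`. -/
def gam (μ : ℂ) (ℓ : ℤ) : ℂ := if ℓ % 2 = 0 then μ + ((ℓ / 2 : ℤ) : ℂ) else 1

/-- `Γ(x+k)/Γ(x)` interpreted as a finite product (reciprocal for `k < 0`). -/
def gratio (x : ℂ) (k : ℤ) : ℂ :=
  if 0 ≤ k then ∏ i ∈ range k.toNat, (x + (i : ℂ))
  else (∏ i ∈ range (-k).toNat, (x + (k : ℂ) + (i : ℂ)))⁻¹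

/-- `Γ(z₁)/Γ(z₂)` at integer arguments, as a finite product. -/
def gq (z₁ z₂ : ℤ) : ℂ := gratio (z₂ : ℂ) (z₁ - z₂)

/-- The set `Λ(N,a,m)`, regarded as a subset of `ℂ`. -/
def LambdaSet (N a : ℕ) (m : ℤ) : Set ℂ :=
  { x | ∃ q : ℤ, max 0 ((N : ℤ) - a + m) ≤ q ∧ q ≤ 2 * N ∧
      x = (N : ℂ) + 1 - (a : ℂ) - (q : ℂ) }

/-- The set `M_ℓ^k`, regarded as a subset of `ℂ`. -/
def Mset (ℓ k : ℤ) : Set ℂ :=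
  { x | ∃ d : ℤ, 0 ≤ d ∧ d ≤ ℓ / 2 - k - 1 ∧ x = -(((ℓ + 1) / 2 : ℤ) : ℂ) - (d : ℂ) }

/-- The solution space `Ξ(λ,a,N,m)` of the system (A_j^±), (B_j^±), realized as
the set of tuples `(f_{-N},…,f_N)`, encoded as functions `ℤ → ℂ[X]` vanishing for `|j| > N`. -/
def XiSet (lam : ℂ) (a N : ℕ) (m : ℤ) : Set (ℤ → ℂ[X]) :=
  { f |
    (∀ j : ℤ, (N : ℤ) < |j| → f j = 0) ∧
    (∀ j : ℤ, |j| ≤ (N : ℤ) → polEven ((a : ℤ) - m + j) (f j)) ∧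
    (∀ j : ℤ, 0 ≤ j → j ≤ (N : ℤ) →
      gegenS (lam + (j : ℂ) - 1) ((a : ℤ) + m - j) (f j)
        - C (2 * ((N : ℂ) - (j : ℂ))) * derivative (f (j + 1)) = 0) ∧
    (∀ j : ℤ, 0 ≤ j → j ≤ (N : ℤ) →
      gegenS (lam + (j : ℂ) - 1) ((a : ℤ) - m - j) (f (-j))
        + C (2 * ((N : ℂ) - (j : ℂ))) * derivative (f (-j - 1)) = 0) ∧
    (∀ j : ℤ, 1 ≤ j → j ≤ (N : ℤ) →
      C (2 * (-(m : ℂ)) * (lam + (a : ℂ) - 1)) * f j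
        + C (2 * (j : ℂ)) * (C (lam - 1) * f j + euler (f j))
        + C ((N : ℂ) - (j : ℂ)) * derivative (f (j + 1))
        + C ((N : ℂ) + (j : ℂ)) * derivative (f (j - 1)) = 0) ∧
    (∀ j : ℤ, 1 ≤ j → j ≤ (N : ℤ) →
      C (2 * (m : ℂ) * (lam + (a : ℂ) - 1)) * f (-j)
        + C (2 * (j : ℂ)) * (C (lam - 1) * f (-j) + euler (f (-j)))
        - C ((N : ℂ) + (j : ℂ)) * derivative (f (-j + 1))
        - C ((N : ℂ) - (j : ℂ)) * derivative (f (-j - 1)) = 0) }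

/-- The constant `C_{j,r}^+`. -/
def Cp (lam : ℂ) (a N : ℕ) (m : ℤ) (j r : ℕ) : ℂ :=
  ((N - j).choose r : ℂ) * (((2 * N - r).factorial : ℂ) / ((N + j).factorial : ℂ)) *
    (∏ i ∈ range r, ((N : ℂ) - (m : ℂ) - (i : ℂ))) *
    (∏ i ∈ range r, (lam + (a : ℂ) - (N : ℂ) - 1 + (i : ℂ)))

/-- The constant `C_{j,r}^-`. -/
def Cm (lam : ℂ) (a N : ℕ) (m : ℤ) (j r : ℕ) : ℂ :=
  ((N - j).choose r : ℂ) * (((2 * N - r).factorial : ℂ) / ((N + j).factorial : ℂ)) *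
    (∏ i ∈ range r, ((N : ℂ) + (m : ℂ) - (i : ℂ))) *
    (∏ i ∈ range r, (lam + (a : ℂ) - (N : ℂ) - 1 + (i : ℂ)))

/-- The gamma factor `Γ_j^+`. -/
def GammaP (lam : ℂ) (a N : ℕ) (m : ℤ) (j : ℕ) : ℂ :=
  ∏ d ∈ range (N - j), gam (lam + (N : ℂ) - 1) ((a : ℤ) + m - (N : ℤ) - ((d : ℤ) + 1))

/-- The gamma factor `Γ_j^-`. -/
def GammaM (lam : ℂ) (a N : ℕ) (m : ℤ) (j : ℕ) : ℂ :=
  ∏ d ∈ range (N - j), gam (lam + (N : ℂ) - 1) ((a : ℤ) - m - (N : ℤ) - ((d : ℤ) + 1))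

/-- The constant `D_{j,r}` (with parameter `q`). -/
def Dc (N : ℕ) (m q : ℤ) (j r : ℕ) : ℂ :=
  ((N - j).choose r : ℂ) * (((2 * N - r).factorial : ℂ) / ((N + j).factorial : ℂ)) *
    (∏ i ∈ range r, ((N : ℂ) + (m : ℂ) - (i : ℂ))) *
    (∏ i ∈ range r, ((q : ℂ) - 2 * (N : ℂ) + (i : ℂ)))

/-- Binomial coefficient with integer upper argument: `binom(x,k) = (∏_{i<k}(x-i))/k!`. -/
def zbinom (x : ℤ) (k : ℕ) : ℂ := (∏ i ∈ range k, ((x : ℂ) - (i : ℂ))) / (k.factorial : ℂ)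

/-- The gamma factor `Γ(d,r)` of the paper (for integral `λ = λz`, `ν = νz`). -/
def GammaAB (N : ℕ) (m lamz nuz : ℤ) (d r : ℕ) : ℂ :=
  (d.choose r : ℂ) *
    gq (lamz + (nuz - lamz - m + (N : ℤ) - (d : ℤ) - 1) / 2)
       (lamz + (nuz - lamz - m - 1) / 2) *
    (((2 * N - r).factorial : ℂ) / (N.factorial : ℂ)) *
    (∏ i ∈ range r, ((N : ℂ) + (m : ℂ) - (i : ℂ)))

/-- The constant `A(d,r)` of the paper (for integral `λ = λz`, `ν = νz`). -/
def Acoef (N : ℕ) (m lamz nuz : ℤ) (d r : ℕ) : ℂ :=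
  (-1 : ℂ) ^ (nuz - 1) * GammaAB N m lamz nuz d r *
    gq (lamz + (-nuz - lamz - m + (N : ℤ) - (d : ℤ) + 1) / 2)
       (lamz + (nuz - lamz - m + (N : ℤ) - (d : ℤ) - 1) / 2) *
    ∏ i ∈ range r, ((N : ℂ) + (nuz : ℂ) - ((i : ℂ) + 1))

/-- The constant `B(d,r)` of the paper (for integral `λ = λz`, `ν = νz`). -/
def Bcoef (N : ℕ) (m lamz nuz : ℤ) (d r : ℕ) : ℂ :=
  (-1 : ℂ) ^ ((d : ℤ) - (N : ℤ)) * GammaAB N m lamz nuz (2 * N - d) r *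
    ∏ i ∈ range r, ((N : ℂ) - (nuz : ℂ) + 2 - ((i : ℂ) + 1))

/-- The predicate `(E_j^+)` on `f_j`. -/
def Eplus (lam : ℂ) (a N : ℕ) (m : ℤ) (qp : ℂ) (j : ℕ) (fj : ℂ[X]) : Prop :=
  C ((-Complex.I) ^ (N - j) * (((2 * N).factorial : ℂ) / ((N + j).factorial : ℂ)) *
      GammaP lam a N m j) * fj
    = C qp * ∑ r ∈ range (N - j + 1),
        C (Cp lam a N m j r) *
          gegenCit (lam + (N : ℂ) - 1 - (r : ℂ)) ((a : ℤ) + m - 2 * (N : ℤ) + (j : ℤ) + 2 * (r : ℤ))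

/-- The predicate `(E_j^-)` on `f_{-j}`. -/
def Eminus (lam : ℂ) (a N : ℕ) (m : ℤ) (qm : ℂ) (j : ℕ) (fj : ℂ[X]) : Prop :=
  C (Complex.I ^ (N - j) * (((2 * N).factorial : ℂ) / ((N + j).factorial : ℂ)) *
      GammaM lam a N m j) * fj
    = C qm * ∑ r ∈ range (N - j + 1),
        C (Cm lam a N m j r) *
          gegenCit (lam + (N : ℂ) - 1 - (r : ℂ)) ((a : ℤ) - m - 2 * (N : ℤ) + (j : ℤ) + 2 * (r : ℤ))

/-- The constant `C_{0,r}(m')` with integer parameter `a`. -/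
def C0r (lam : ℂ) (N : ℕ) (a m' : ℤ) (r : ℕ) : ℂ :=
  (N.choose r : ℂ) * (((2 * N - r).factorial : ℂ) / (N.factorial : ℂ)) *
    (∏ i ∈ range r, ((N : ℂ) - (m' : ℂ) - (i : ℂ))) *
    (∏ i ∈ range r, (lam + (a : ℂ) - (N : ℂ) - 1 + (i : ℂ)))

/-- `α(λ,N,a,m')`. -/
def alphaF (lam : ℂ) (N : ℕ) (a m' : ℤ) : ℂ :=
  ∑ r ∈ range (N + 1), (-1 : ℂ) ^ r * C0r lam N a m' r *
    ∏ i ∈ range (N - r), ((((a + m') / 2 : ℤ) : ℂ) - ((i : ℂ) + 1))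

/-- `β(λ,N,a,m')`. -/
def betaF (lam : ℂ) (N : ℕ) (a m' : ℤ) : ℂ :=
  ∑ r ∈ range (N + 1), (-1 : ℂ) ^ r * C0r lam N a m' r *
    ∏ i ∈ range (N - r), ((((a + m' + 2) / 2 : ℤ) : ℂ) - ((i : ℂ) + 1))

/-- The polynomial function `P(λ)`. -/
def Pf (N : ℕ) (a m : ℤ) (lam : ℂ) : ℂ :=
  (lam + (((a + m - 1) / 2 : ℤ) : ℂ)) * (((a + m) / 2 : ℤ) : ℂ) *
      alphaF lam N a m * betaF lam N a (-m)
    - (lam + (((a - m - 1) / 2 : ℤ) : ℂ)) * (((a - m) / 2 : ℤ) : ℂ) *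
      alphaF lam N a (-m) * betaF lam N a m

/-- The polynomial function `Q(λ)`. -/
def Qf (N : ℕ) (a m : ℤ) (lam : ℂ) : ℂ :=
  (∏ i ∈ range (N + 1), ((m : ℂ) + (i : ℂ))) *
    (∏ i ∈ range N, (((i : ℂ) + 1) - (m : ℂ))) *
    ∏ q ∈ range (2 * N + 1), (lam - (N : ℂ) - 1 + (a : ℂ) + (q : ℂ))

/-- `α̃(a,m')`. -/
def alphaTilde (N q : ℕ) (a m' : ℤ) : ℂ :=
  ∑ r ∈ range (min q N + 1),
    (N.choose r : ℂ) * (((2 * N - r).factorial : ℂ) / ((2 * N - q).factorial : ℂ)) *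
      ((q.factorial : ℂ) / ((q - r).factorial : ℂ)) *
      (∏ i ∈ range r, ((N : ℂ) - (m' : ℂ) - (i : ℂ))) *
      (∏ i ∈ Finset.Ico r q, ((((a + m') / 2 : ℤ) : ℂ) - (N : ℂ) + (i : ℂ)))

/-- The explicit generating tuple of `Ξ(λ,a,N,m)` of Theorem 4.3 (statement 1). -/
def F1 (N a : ℕ) (m q : ℤ) : ℤ → ℂ[X] := fun j =>
  let lamz : ℤ := (N : ℤ) + 1 - a - q
  let nuz : ℤ := (N : ℤ) + 1 - q
  let lam : ℂ := (lamz : ℂ)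
  if 1 ≤ j ∧ j ≤ (N : ℤ) then
    C (Complex.I ^ (-j) * (-1 : ℂ) ^ (nuz - 1)) *
      ∑ r ∈ range (N - j.toNat + 1),
        C ((-1 : ℂ) ^ r * Acoef N m lamz nuz (N - j.toNat) r) *
          gegenCit (lam + (N : ℂ) - 1 - (r : ℂ))
            ((a : ℤ) - m + j + 2 * (1 - (N : ℤ) - nuz + (r : ℤ)))
  else if -(N : ℤ) ≤ j ∧ j ≤ 0 then
    C (Complex.I ^ j) *
      ∑ r ∈ range (N - (-j).toNat + 1),
        C ((-1 : ℂ) ^ r * Bcoef N m lamz nuz (N + (-j).toNat) r) *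
          gegenCit (lam + (N : ℂ) - 1 - (r : ℂ))
            ((a : ℤ) - m + (-j) - 2 * (N : ℤ) + 2 * (r : ℤ))
  else 0

/-- The explicit tuple of statement 16. -/
def F16 (N a : ℕ) (m q : ℤ) : ℤ → ℂ[X] := fun j =>
  let lam : ℂ := (N : ℂ) + 1 - (a : ℂ) - (q : ℂ)
  if 1 ≤ j ∧ j ≤ (N : ℤ) then
    C ((-Complex.I) ^ j.toNat * (((N + j.toNat).factorial : ℂ) / (N.factorial : ℂ)) *
        gratio (lam + ((((a : ℤ) - m - 1) / 2 : ℤ) : ℂ))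
          (((a : ℤ) - m + j - 1) / 2 + q - (N : ℤ) - ((a : ℤ) - m - 1) / 2)) *
      ∑ r ∈ range (N - j.toNat + 1),
        C (Dc N m q j.toNat r) *
          gegenCit (lam + (N : ℂ) - 1 - (r : ℂ))
            ((a : ℤ) - m + j + 2 * (q - 2 * (N : ℤ) + (r : ℤ)))
  else if -(N : ℤ) ≤ j ∧ j ≤ 0 then
    C (Complex.I ^ (-j).toNat * (((N + (-j).toNat).factorial : ℂ) / (N.factorial : ℂ)) *
        gratio (lam + ((((a : ℤ) - m - 1) / 2 : ℤ) : ℂ))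
          (((a : ℤ) - m + (-j) - 1) / 2 - ((a : ℤ) - m - 1) / 2)) *
      ∑ r ∈ range (N - (-j).toNat + 1),
        C (Cm lam a N m (-j).toNat r) *
          gegenCit (lam + (N : ℂ) - 1 - (r : ℂ))
            ((a : ℤ) - m - 2 * (N : ℤ) + (-j) + 2 * (r : ℤ))
  else 0

/-- vanishing propagation for members of `Ξ(λ,a,N,m)` when `m > N`. -/

lemma gegenS_C' (μ : ℂ) (ℓ : ℤ) (c : ℂ) :
    gegenS μ ℓ (C c) = C ((ℓ:ℂ) * ((ℓ:ℂ) + 2*μ) * c) := by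
  simp [gegenS]

lemma gegenS_zero' (μ : ℂ) (ℓ : ℤ) : gegenS μ ℓ 0 = 0 := by
  simp [gegenS]

lemma coeff_rec' (μ : ℂ) (ℓ : ℤ) (f : ℂ[X]) (h : gegenS μ ℓ f = 0) (n : ℕ) :
    ((n:ℂ) - (ℓ:ℂ)) * ((n:ℂ) + (ℓ:ℂ) + 2*μ) * f.coeff n
      + ((n:ℂ)+2) * ((n:ℂ)+1) * f.coeff (n+2) = 0 := by
  have hg : gegenS μ ℓ f = -(derivative (derivative f)
      + X^2 * derivative (derivative f) + C (1+2*μ) * (X * derivative f)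
      - C ((ℓ:ℂ)*((ℓ:ℂ)+2*μ)) * f) := by
    simp only [gegenS, map_add, map_mul, map_one, map_ofNat]
    ring
  rw [hg] at h
  have h' := congrArg (fun p => Polynomial.coeff p n) h
  simp only [coeff_neg, coeff_add, coeff_sub, coeff_C_mul, coeff_zero, neg_eq_zero] at h'
  match n with
  | 0 =>
    rw [Polynomial.mul_coeff_zero, Polynomial.mul_coeff_zero] at h'
    simp only [coeff_derivative, coeff_X_pow, coeff_X_zero, zero_mul, mul_zero] at h' ⊢
    push_cast at h' ⊢
    linear_combination h'
  | 1 =>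
    have hx2 : (X^2 * derivative (derivative f)).coeff 1 = 0 := by
      rw [pow_two, mul_assoc, show (1:ℕ) = 0 + 1 from rfl, Polynomial.coeff_X_mul,
        Polynomial.mul_coeff_zero]
      simp
    have hx1 : ((X : ℂ[X]) * derivative f).coeff 1 = (derivative f).coeff 0 :=
      Polynomial.coeff_X_mul (derivative f) 0
    rw [hx2, hx1] at h'
    simp only [coeff_derivative] at h'
    push_cast at h' ⊢
    linear_combination h'
  | (d+2) =>
    rw [Polynomial.coeff_X_pow_mul] at h'
    rw [show d + 2 = (d+1) + 1 from rfl, Polynomial.coeff_X_mul] at h'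
    simp only [coeff_derivative] at h'
    push_cast at h' ⊢
    linear_combination h'

lemma vanish' (b ℓ : ℤ) (μ : ℂ) (f : ℂ[X])
    (hpol : ∀ n : ℕ, f.coeff n ≠ 0 → (n:ℤ) ≤ b ∧ (2:ℤ) ∣ (b - n))
    (hrec : ∀ n : ℕ, ((n:ℂ) - (ℓ:ℂ)) * ((n:ℂ) + (ℓ:ℂ) + 2*μ) * f.coeff n
      + ((n:ℂ)+2) * ((n:ℂ)+1) * f.coeff (n+2) = 0)
    (hlb : b < ℓ)
    (hne : ∀ n : ℕ, (n:ℤ) ≤ b → (2:ℤ) ∣ (b - n) → (n:ℂ) + (ℓ:ℂ) + 2*μ ≠ 0) :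
    f = 0 := by
  have claim : ∀ k : ℕ, ∀ n : ℕ, (b:ℤ) < (n:ℤ) + k → f.coeff n = 0 := by
    intro k
    induction k with
    | zero =>
      intro n hn
      by_contra h
      have := (hpol n h).1
      omega
    | succ k ih =>
      intro n hn
      by_contra h
      obtain ⟨h1, h2⟩ := hpol n h
      have h3 : f.coeff (n+2) = 0 := by
        apply ih
        push_cast
        omega
      have h4 := hrec n
      rw [h3, mul_zero, add_zero] at h4
      have h5 : (n:ℂ) - (ℓ:ℂ) ≠ 0 :=
        sub_ne_zero.mpr (by exact_mod_cast (show ((n:ℤ)) ≠ ℓ by omega))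
      have h6 := mul_ne_zero h5 (hne n h1 h2)
      exact h ((mul_eq_zero.mp h4).resolve_left h6)
  ext n
  simp only [coeff_zero]
  exact claim (b.toNat + 1) n (by push_cast; omega)


theorem stmt3 (lam : ℂ) (a N : ℕ) (m : ℤ) (hm : (N : ℤ) < m)
    (f : ℤ → ℂ[X]) (hf : f ∈ XiSet lam a N m) :
    (∀ j : ℤ, 0 ≤ j → j ≤ (N : ℤ) - 1 →
      lam + (j : ℂ) - 1 ∉ Mset ((a : ℤ) + m - j) (m - j - 1) →
      f (j + 1) = 0 → f j = 0) ∧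
    (∀ j : ℤ, 1 ≤ j → j ≤ (N : ℤ) →
      gam lam ((a : ℤ) + m - j - 2) ≠ 0 →
      f (-j + 1) = 0 → f (-j) = 0) := by
  obtain ⟨hzero, hpol, hA, hAm, hB, hBm⟩ := hf
  constructor
  · intro j hj0 hjN hM hz
    have hAj := hA j hj0 (by omega)
    rw [hz, derivative_zero, mul_zero, sub_zero] at hAj
    have hp := hpol j (by rw [abs_of_nonneg hj0]; omega)
    refine vanish' ((a:ℤ) - m + j) ((a:ℤ) + m - j) (lam + (j:ℂ) - 1) (f j) hp
      (coeff_rec' _ _ _ hAj) (by omega) ?_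
    intro n hn hdvd hcon
    apply hM
    obtain ⟨d, hd0, hd1, hd2⟩ :
        ∃ d : ℤ, 0 ≤ d ∧ d ≤ ((a:ℤ)+m-j)/2 - (m-j-1) - 1 ∧
          (n:ℤ) + ((a:ℤ)+m-j) = 2*((((a:ℤ)+m-j+1))/2 + d) :=
      ⟨((n:ℤ) + ((a:ℤ)+m-j))/2 - (((a:ℤ)+m-j)+1)/2, by omega, by omega, by omega⟩
    refine ⟨d, hd0, hd1, ?_⟩
    have hc := congrArg (fun z : ℤ => (z : ℂ)) hd2
    push_cast at hc hcon
    linear_combination hcon/2 - hc/2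
  · intro j hj1 hjN hg hz
    have hstep := hAm (j-1) (by omega) (by omega)
    rw [show -(j-1) = -j+1 by ring, show -j+1-1 = -j by ring, hz, gegenS_zero',
      zero_add] at hstep
    have hC : (2 * ((N:ℂ) - ((j - 1 : ℤ) : ℂ))) ≠ 0 := by
      have h0 : ((2*((N:ℤ) - (j-1)) : ℤ) : ℂ) ≠ 0 := Int.cast_ne_zero.mpr (by omega)
      intro hcontra
      apply h0
      push_cast at hcontra ⊢
      linear_combination hcontra
    have hder : derivative (f (-j)) = 0 := by
      rcases mul_eq_zero.mp hstep with h | h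
      · exact absurd (by rwa [Polynomial.C_eq_zero] at h) hC
      · exact h
    have hfc : f (-j) = C ((f (-j)).coeff 0) :=
      Polynomial.eq_C_of_natDegree_eq_zero
        (Polynomial.natDegree_eq_zero_of_derivative_eq_zero hder)
    set c : ℂ := (f (-j)).coeff 0 with hcdef
    have h4 := hAm j (by omega) hjN
    have h5 := hBm j hj1 hjN
    rw [hfc, gegenS_C'] at h4
    rw [hfc, hz, derivative_zero, mul_zero, sub_zero] at h5
    have heul : euler (C c) = 0 := by simp [euler]
    rw [heul] at h5
    have key : (((a:ℂ)+(m:ℂ)+(j:ℂ)) * ((a:ℂ)+(m:ℂ)-(j:ℂ)-2+2*lam)) * c = 0 := by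
      rw [← Polynomial.C_eq_zero]
      push_cast at h4 h5 ⊢
      simp only [map_mul, map_add, map_sub, map_one, map_ofNat, map_neg] at h4 h5 ⊢
      linear_combination h4 + 2 * h5
    have hcz : c = 0 := by
      by_cases hb : 0 ≤ (a:ℤ)-m-j ∧ (2:ℤ) ∣ ((a:ℤ)-m-j)
      · have f1 : ((a:ℂ)+(m:ℂ)+(j:ℂ)) ≠ 0 := by
          have h0 : (((a:ℤ)+m+j : ℤ):ℂ) ≠ 0 := Int.cast_ne_zero.mpr (by omega)
          intro hcontra; apply h0; push_cast; linear_combination hcontra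
        have hpar : ((a:ℤ)+m-j-2) % 2 = 0 := by omega
        rw [gam, if_pos hpar] at hg
        have hhalf : 2*(((a:ℤ)+m-j-2)/2) = (a:ℤ)+m-j-2 := by omega
        have hhc := congrArg (fun z : ℤ => (z : ℂ)) hhalf
        push_cast at hhc
        have f2 : ((a:ℂ)+(m:ℂ)-(j:ℂ)-2+2*lam) ≠ 0 := by
          intro h0; apply hg
          linear_combination h0/2 + hhc/2
        exact (mul_eq_zero.mp key).resolve_left (mul_ne_zero f1 f2)
      · by_contra hc0
        have := hpol (-j) (by rw [abs_neg, abs_of_nonneg (by omega : (0:ℤ) ≤ j)]; omega)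
        have h6 := this 0 (by rwa [hcdef] at hc0)
        simp only [Nat.cast_zero, sub_zero] at h6
        exact hb (by constructor <;> omega)
    rw [hfc, hcz, map_zero]
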